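/- There exists a post-Lie algebra structure on the pair (g, n), where g = sl_2(ℂ) ⊕ ℂ⁴ (the direct Lie algebra sum of sl_2(ℂ) and the 4-dimensional abelian Lie algebra) and n = ℂ⁴ ⊕ n_3(ℂ) (the direct Lie algebra sum of the 4-dimensional abelian Lie algebra and the 3-dimensional Heisenberg Lie algebra), both regarded as Lie brackets on the same 7-dimensional complex vector space. In particular, there is a pair (g, n) with g reductive non-semisimple and n nilpotent non-abelian admitting a post-Lie algebra structure. -/
import Mathlib


noncomputable section

/-- A map `V → V → V` is ℂ-bilinear. -/
def IsBilin {V : Type*} [AddCommGroup V] [Module ℂ V] (f : V → V → V) : Prop :=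
  (∀ (a : ℂ) (x y z : V), f (a • x + y) z = a • f x z + f y z) ∧
  (∀ (a : ℂ) (x y z : V), f x (a • y + z) = a • f x y + f x z)

/-- `f` is a Lie bracket on the complex vector space `V`. -/
def IsLieBracket {V : Type*} [AddCommGroup V] [Module ℂ V] (f : V → V → V) : Prop :=
  IsBilin f ∧ (∀ x, f x x = 0) ∧
  ∀ x y z, f x (f y z) + f y (f z x) + f z (f x y) = 0

/-- `p` is a post-Lie algebra structure on the pair of Lie brackets `(g, n)` on `V`. -/
def IsPostLieStruct {V : Type*} [AddCommGroup V] [Module ℂ V]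
    (g n p : V → V → V) : Prop :=
  IsBilin p ∧
  (∀ x y, p x y - p y x = g x y - n x y) ∧
  (∀ x y z, p (g x y) z = p x (p y z) - p y (p x z)) ∧
  (∀ x y z, p x (n y z) = n (p x y) z + n y (p x z))

/-- The bracket of `g = sl₂(ℂ) ⊕ ℂ⁴` on `ℂ⁷`: coordinates `0, 1, 2` carry `sl₂(ℂ)`
in the standard basis `(e, f, h) = (E₁₂, E₂₁, E₁₁ - E₂₂)` with `[e,f] = h`,
`[h,e] = 2e`, `[h,f] = -2f`, and coordinates `3, 4, 5, 6` carry the `4`-dimensional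
abelian Lie algebra. -/
def sl2C4Bracket (x y : Fin 7 → ℂ) : Fin 7 → ℂ :=
  ![2 * (x 2 * y 0 - y 2 * x 0), -2 * (x 2 * y 1 - y 2 * x 1),
    x 0 * y 1 - y 0 * x 1, 0, 0, 0, 0]

/-- The bracket of `n = ℂ⁴ ⊕ n₃(ℂ)` on `ℂ⁷`: coordinates `0, 1, 2, 3` carry the
`4`-dimensional abelian Lie algebra, and coordinates `4, 5, 6` carry the Heisenberg
Lie algebra `n₃(ℂ)` with basis `(e, f, z)` and only nonzero bracket `{e, f} = z`. -/
def c4HeisBracket (x y : Fin 7 → ℂ) : Fin 7 → ℂ :=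
  ![0, 0, 0, 0, 0, 0, x 4 * y 5 - y 4 * x 5]


/-- The post-Lie product: on coordinates `0,1,2,3` (identified with `gl2(C)` via
`(e, f, h, I)`) it is given by left matrix multiplication by the `sl2`-component,
and `p(v4, v5) = -v6` accounts for the Heisenberg bracket. -/
def pProd (x y : Fin 7 → ℂ) : Fin 7 → ℂ :=
  ![x 0 * y 3 - x 0 * y 2 + x 2 * y 0 + x 3 * y 0,
    x 1 * y 2 + x 1 * y 3 - x 2 * y 1 + x 3 * y 1,
    (x 0 * y 1 - x 1 * y 0) / 2 + x 3 * y 2 + x 2 * y 3,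
    (x 0 * y 1 + x 1 * y 0) / 2 + x 2 * y 2 + x 3 * y 3,
    0, 0, -(x 4 * y 5)]

lemma P0 (x y : Fin 7 → ℂ) : pProd x y 0 = x 0 * y 3 - x 0 * y 2 + x 2 * y 0 + x 3 * y 0 := rfl
lemma P1 (x y : Fin 7 → ℂ) : pProd x y 1 = x 1 * y 2 + x 1 * y 3 - x 2 * y 1 + x 3 * y 1 := rfl
lemma P2 (x y : Fin 7 → ℂ) : pProd x y 2 = (x 0 * y 1 - x 1 * y 0) / 2 + x 3 * y 2 + x 2 * y 3 := rfl
lemma P3 (x y : Fin 7 → ℂ) : pProd x y 3 = (x 0 * y 1 + x 1 * y 0) / 2 + x 2 * y 2 + x 3 * y 3 := rfl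
lemma P4 (x y : Fin 7 → ℂ) : pProd x y 4 = 0 := rfl
lemma P5 (x y : Fin 7 → ℂ) : pProd x y 5 = 0 := rfl
lemma P6 (x y : Fin 7 → ℂ) : pProd x y 6 = -(x 4 * y 5) := rfl

lemma G0 (x y : Fin 7 → ℂ) : sl2C4Bracket x y 0 = 2 * (x 2 * y 0 - y 2 * x 0) := rfl
lemma G1 (x y : Fin 7 → ℂ) : sl2C4Bracket x y 1 = -2 * (x 2 * y 1 - y 2 * x 1) := rfl
lemma G2 (x y : Fin 7 → ℂ) : sl2C4Bracket x y 2 = x 0 * y 1 - y 0 * x 1 := rfl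
lemma G3 (x y : Fin 7 → ℂ) : sl2C4Bracket x y 3 = 0 := rfl
lemma G4 (x y : Fin 7 → ℂ) : sl2C4Bracket x y 4 = 0 := rfl
lemma G5 (x y : Fin 7 → ℂ) : sl2C4Bracket x y 5 = 0 := rfl
lemma G6 (x y : Fin 7 → ℂ) : sl2C4Bracket x y 6 = 0 := rfl

lemma N0 (x y : Fin 7 → ℂ) : c4HeisBracket x y 0 = 0 := rfl
lemma N1 (x y : Fin 7 → ℂ) : c4HeisBracket x y 1 = 0 := rfl
lemma N2 (x y : Fin 7 → ℂ) : c4HeisBracket x y 2 = 0 := rfl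
lemma N3 (x y : Fin 7 → ℂ) : c4HeisBracket x y 3 = 0 := rfl
lemma N4 (x y : Fin 7 → ℂ) : c4HeisBracket x y 4 = 0 := rfl
lemma N5 (x y : Fin 7 → ℂ) : c4HeisBracket x y 5 = 0 := rfl
lemma N6 (x y : Fin 7 → ℂ) : c4HeisBracket x y 6 = x 4 * y 5 - y 4 * x 5 := rfl

/-- There exists a post-Lie algebra structure on the pair `(g, n)`
with `g = sl₂(ℂ) ⊕ ℂ⁴` and `n = ℂ⁴ ⊕ n₃(ℂ)`, both regarded as Lie brackets on the
same `7`-dimensional complex vector space; in particular `g` is reductive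
non-semisimple and `n` is nilpotent non-abelian. -/
theorem postLie_exists_on_sl2c4_c4heis :
    IsLieBracket sl2C4Bracket ∧ IsLieBracket c4HeisBracket ∧
    ∃ p : (Fin 7 → ℂ) → (Fin 7 → ℂ) → (Fin 7 → ℂ),
      IsPostLieStruct sl2C4Bracket c4HeisBracket p := by
  refine ⟨⟨⟨?_, ?_⟩, ?_, ?_⟩, ⟨⟨?_, ?_⟩, ?_, ?_⟩, pProd, ⟨?_, ?_⟩, ?_, ?_, ?_⟩ <;>
    · intros
      funext i
      fin_cases i <;>
        simp only [Fin.reduceFinMk, Fin.isValue, Pi.add_apply, Pi.sub_apply, Pi.smul_apply,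
          Pi.zero_apply, smul_eq_mul, P0, P1, P2, P3, P4, P5, P6, G0, G1, G2, G3, G4, G5, G6,
          N0, N1, N2, N3, N4, N5, N6] <;> ring
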